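/- Let G be the presented group ⟨a, b, c | r₁, r₂, r₃⟩ where r₁ = a·c·b⁻¹·a⁻¹·c⁻¹·a·c·b·c⁻¹, r₂ = a·a·b⁻¹·c·b·a·b·c⁻¹, r₃ = a·b·a⁻¹·b⁻¹·c·c. Then there exists a surjective group homomorphism from G onto the dihedral group of order 6. -/

import Mathlib

namespace Stmt1

/-- The generator `a` of the free group on three generators. -/
def a : FreeGroup (Fin 3) := FreeGroup.of 0
/-- The generator `b` of the free group on three generators. -/
def b : FreeGroup (Fin 3) := FreeGroup.of 1
/-- The generator `c` of the free group on three generators. -/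
def c : FreeGroup (Fin 3) := FreeGroup.of 2

/-- The relator `r₁ = a·c·b⁻¹·a⁻¹·c⁻¹·a·c·b·c⁻¹`. -/
def r₁ : FreeGroup (Fin 3) := a * c * b⁻¹ * a⁻¹ * c⁻¹ * a * c * b * c⁻¹
/-- The relator `r₂ = a·a·b⁻¹·c·b·a·b·c⁻¹`. -/
def r₂ : FreeGroup (Fin 3) := a * a * b⁻¹ * c * b * a * b * c⁻¹
/-- The relator `r₃ = a·b·a⁻¹·b⁻¹·c·c`. -/
def r₃ : FreeGroup (Fin 3) := a * b * a⁻¹ * b⁻¹ * c * c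

def g : Fin 3 → DihedralGroup 3 := ![1, .r 1, .sr 0]

lemma hrel : ∀ r ∈ ({r₁, r₂, r₃} : Set (FreeGroup (Fin 3))), FreeGroup.lift g r = 1 := by
  intro r hr
  rcases hr with h | h | h <;> subst h <;>
    simp [r₁, r₂, r₃, a, b, c, g] <;> decide

/-- The presented group `⟨a, b, c | r₁, r₂, r₃⟩` surjects onto the dihedral
group of order 6. -/
theorem exists_surjective_hom_to_dihedral :
    ∃ f : PresentedGroup ({r₁, r₂, r₃} : Set (FreeGroup (Fin 3))) →* DihedralGroup 3,
      Function.Surjective f := by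
  refine ⟨PresentedGroup.toGroup hrel, ?_⟩
  have hb : PresentedGroup.toGroup hrel (PresentedGroup.of 1) = .r 1 :=
    PresentedGroup.toGroup.of hrel
  have hc : PresentedGroup.toGroup hrel (PresentedGroup.of 2) = .sr 0 :=
    PresentedGroup.toGroup.of hrel
  intro x
  rcases x with i | i <;> fin_cases i
  · exact ⟨1, by simp; decide⟩
  · exact ⟨PresentedGroup.of 1, hb⟩
  · exact ⟨(PresentedGroup.of 1)^2, by simp [hb]; decide⟩
  · exact ⟨PresentedGroup.of 2, hc⟩
  · exact ⟨PresentedGroup.of 2 * PresentedGroup.of 1, by simp [hb, hc]; decide⟩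
  · exact ⟨PresentedGroup.of 2 * (PresentedGroup.of 1)^2, by simp [hb, hc]; decide⟩

end Stmt1
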